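/- arXiv:2503.06714 — 2 statements merged into one kernel-verified Lean document; each statement's English description precedes it below -/
import Mathlib

section
/- Let G be a finite group and N ⊴ G. The map sending a subrack S of the quotient group rack (G/N, ▷) to the union of the cosets belonging to S is an injective, order- and join-preserving map from R(G/N) into R(G); hence R(G/N) is isomorphic to a subposet of R(G). -/
/-- A subset of a group closed under conjugation by its own elements. -/
def IsSubrack {G : Type*} [Group G] (S : Set G) : Prop :=
  ∀ a ∈ S, ∀ b ∈ S, a * b * a⁻¹ ∈ S

/-- The subrack generated by a subset: the intersection of all subracks containing it. -/
def rackClosure {G : Type*} [Group G] (S : Set G) : Set G :=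
  ⋂₀ {T : Set G | IsSubrack T ∧ S ⊆ T}

lemma isSubrack_rackClosure {G : Type*} [Group G] (S : Set G) :
    IsSubrack (rackClosure S) := by
  intro a ha b hb
  intro T hT
  exact hT.1 a (ha T hT) b (hb T hT)

lemma subset_rackClosure {G : Type*} [Group G] (S : Set G) : S ⊆ rackClosure S :=
  fun x hx T hT => hT.2 hx

lemma rackClosure_min {G : Type*} [Group G] {S T : Set G} (hT : IsSubrack T)
    (hST : S ⊆ T) : rackClosure S ⊆ T :=
  fun x hx => hx T ⟨hT, hST⟩

lemma preimage_subrack {G : Type*} [Group G] (N : Subgroup G) [N.Normal]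
    {S : Set (G ⧸ N)} (hS : IsSubrack S) :
    IsSubrack (QuotientGroup.mk (s := N) ⁻¹' S) := by
  intro a ha b hb
  show ((a * b * a⁻¹ : G) : G ⧸ N) ∈ S
  rw [QuotientGroup.mk_mul, QuotientGroup.mk_mul, QuotientGroup.mk_inv]
  exact hS _ ha _ hb

/-- Taking unions of cosets (preimages under the quotient map) embeds the subrack
lattice of G/N into that of G: it sends subracks to subracks, is injective,
order-preserving and order-reflecting, and preserves joins. Hence R(G/N) is
isomorphic to a subposet of R(G). -/
theorem stmt11 {G : Type*} [Group G] [Finite G] (N : Subgroup G) [N.Normal] :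
    (∀ S : Set (G ⧸ N), IsSubrack S → IsSubrack (QuotientGroup.mk ⁻¹' S)) ∧
    (Function.Injective fun S : Set (G ⧸ N) => QuotientGroup.mk (s := N) ⁻¹' S) ∧
    (∀ S T : Set (G ⧸ N), IsSubrack S → IsSubrack T →
      (S ⊆ T ↔ QuotientGroup.mk (s := N) ⁻¹' S ⊆ QuotientGroup.mk ⁻¹' T)) ∧
    (∀ S T : Set (G ⧸ N), IsSubrack S → IsSubrack T →
      QuotientGroup.mk (s := N) ⁻¹' (rackClosure (S ∪ T)) =
        rackClosure (QuotientGroup.mk ⁻¹' S ∪ QuotientGroup.mk ⁻¹' T)) := by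
  have hsurj : Function.Surjective (QuotientGroup.mk (s := N)) :=
    QuotientGroup.mk_surjective
  refine ⟨fun S hS => preimage_subrack N hS,
    Set.preimage_injective.mpr hsurj,
    fun S T _ _ => ⟨fun h => Set.preimage_mono h, fun h s hs => ?_⟩, fun S T _ _ => ?_⟩
  · obtain ⟨g, rfl⟩ := hsurj s
    exact h hs
  · -- join preservation
    rw [← Set.preimage_union]
    set U : Set (G ⧸ N) := S ∪ T with hU
    set C : Set G := rackClosure (QuotientGroup.mk (s := N) ⁻¹' U) with hC
    -- the saturation set
    set E : Set G := {x | ∀ y : G, (y : G ⧸ N) = (x : G ⧸ N) → y ∈ C} with hE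
    have hCE : C ⊆ E := by
      apply rackClosure_min
      · intro a ha b hb y hy
        have hb' : a⁻¹ * y * a ∈ C := by
          apply hb
          rw [QuotientGroup.mk_mul, QuotientGroup.mk_mul, hy, QuotientGroup.mk_inv,
            QuotientGroup.mk_mul, QuotientGroup.mk_mul, QuotientGroup.mk_inv]
          group
        have : a * (a⁻¹ * y * a) * a⁻¹ ∈ C := by
          refine isSubrack_rackClosure _ a ?_ _ hb'
          exact ha a rfl
        simpa [mul_assoc] using this
      · intro x hx y hy
        have : y ∈ QuotientGroup.mk (s := N) ⁻¹' U := by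
          show (y : G ⧸ N) ∈ U
          rw [hy]; exact hx
        exact subset_rackClosure _ this
    -- image of C is a subrack containing U
    have himg : IsSubrack (QuotientGroup.mk (s := N) '' C) := by
      rintro _ ⟨a, ha, rfl⟩ _ ⟨b, hb, rfl⟩
      exact ⟨a * b * a⁻¹, isSubrack_rackClosure _ a ha b hb, by
        rw [QuotientGroup.mk_mul, QuotientGroup.mk_mul, QuotientGroup.mk_inv]⟩
    have hUimg : U ⊆ QuotientGroup.mk (s := N) '' C := by
      intro u hu
      obtain ⟨g, rfl⟩ := hsurj u
      exact ⟨g, subset_rackClosure _ hu, rfl⟩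
    apply Set.Subset.antisymm
    · intro x hx
      have : (x : G ⧸ N) ∈ QuotientGroup.mk (s := N) '' C :=
        rackClosure_min himg hUimg hx
      obtain ⟨c, hc, hcx⟩ := this
      exact hCE hc x hcx.symm
    · exact rackClosure_min (preimage_subrack N (isSubrack_rackClosure U))
        (Set.preimage_mono (subset_rackClosure U))
end

section
/- Let G be a finite group, N ⊴ G a normal subgroup, and H a finite group with an isomorphism α : R(G) → R(H) of subrack lattices. Then the images under α of the cosets of N (the atoms of the copy of R(G/N) inside R(G)) form a partition of H into parts of equal cardinality, and the block containing the image of N itself is a union of conjugacy classes of H containing a central element. -/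
open scoped Pointwise

/-- The subrack lattice of a group, as a poset of conjugation-closed subsets. -/
def SubrackLattice (G : Type*) [Group G] : Type _ := {S : Set G // IsSubrack S}

instance {G : Type*} [Group G] : PartialOrder (SubrackLattice G) :=
  Subtype.partialOrder _

lemma isSubrack_empty {G : Type*} [Group G] : IsSubrack (∅ : Set G) :=
  fun a ha => absurd ha (Set.notMem_empty a)

lemma isSubrack_singleton {G : Type*} [Group G] (x : G) : IsSubrack ({x} : Set G) := by
  intro a ha b hb
  simp only [Set.mem_singleton_iff] at *
  subst ha; subst hb
  group

lemma isSubrack_pair_one {G : Type*} [Group G] (a : G) : IsSubrack ({1, a} : Set G) := by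
  intro u hu v hv
  simp only [Set.mem_insert_iff, Set.mem_singleton_iff] at *
  rcases hu with rfl | rfl <;> rcases hv with rfl | rfl <;> simp

lemma isSubrack_union_cosets {G : Type*} [Group G] (N : Subgroup G) [hN : N.Normal] (a : G) :
    IsSubrack ((N : Set G) ∪ a • (N : Set G)) := by
  intro u hu v hv
  rcases hu with hu | hu <;> rcases hv with hv | hv
  · exact Or.inl (mul_mem (mul_mem hu hv) (inv_mem hu))
  · obtain ⟨m, hm, rfl⟩ := hv
    refine Or.inr ⟨a⁻¹ * u * a * m * u⁻¹, ?_, ?_⟩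
    · exact mul_mem (mul_mem (by simpa using hN.conj_mem u hu a⁻¹) hm) (inv_mem hu)
    · simp only [smul_eq_mul]; group
  · obtain ⟨n, hn, rfl⟩ := hu
    refine Or.inl ?_
    simp only [smul_eq_mul]
    have heq : (a * n) * v * (a * n)⁻¹ = a * (n * v * n⁻¹) * a⁻¹ := by group
    rw [heq]
    exact hN.conj_mem _ (mul_mem (mul_mem hn hv) (inv_mem hn)) a
  · obtain ⟨n, hn, rfl⟩ := hu
    obtain ⟨m, hm, rfl⟩ := hv
    refine Or.inr ⟨n * (a * (m * n⁻¹) * a⁻¹), ?_, ?_⟩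
    · exact mul_mem hn (hN.conj_mem _ (mul_mem hm (inv_mem hn)) a)
    · simp only [smul_eq_mul]; group

lemma subrack_image_empty {G H : Type*} [Group G] [Group H]
    (α : SubrackLattice G ≃o SubrackLattice H) :
    (α ⟨∅, isSubrack_empty⟩).val = ∅ := by
  have h : α ⟨∅, isSubrack_empty⟩ ≤ α (α.symm ⟨∅, isSubrack_empty⟩) := by
    erw [α.le_iff_le]
    exact fun x hx => absurd hx (Set.notMem_empty x)
  erw [α.apply_symm_apply] at h
  exact Set.subset_empty_iff.mp h

lemma subrack_image_nonempty {G H : Type*} [Group G] [Group H]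
    (α : SubrackLattice G ≃o SubrackLattice H) (S : SubrackLattice G)
    (hS : S.val.Nonempty) : (α S).val.Nonempty := by
  by_contra h
  rw [Set.not_nonempty_iff_eq_empty] at h
  have h2 : α S = α ⟨∅, isSubrack_empty⟩ :=
    Subtype.ext (h.trans (subrack_image_empty α).symm)
  have h3 := α.injective h2
  obtain ⟨x, hx⟩ := hS
  rw [h3] at hx
  exact hx

lemma subrack_singleton_image {G H : Type*} [Group G] [Group H]
    (α : SubrackLattice G ≃o SubrackLattice H) (x : G) :
    ∃ y : H, (α ⟨{x}, isSubrack_singleton x⟩).val = {y} := by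
  obtain ⟨y, hy⟩ := subrack_image_nonempty α ⟨{x}, isSubrack_singleton x⟩ ⟨x, rfl⟩
  refine ⟨y, ?_⟩
  have hle : α.symm ⟨{y}, isSubrack_singleton y⟩ ≤ ⟨{x}, isSubrack_singleton x⟩ := by
    erw [OrderIso.symm_apply_le]
    exact fun t ht => by
      rw [Set.mem_singleton_iff] at ht; subst ht; exact hy
  obtain ⟨x', hx'⟩ := subrack_image_nonempty α.symm ⟨{y}, isSubrack_singleton y⟩ ⟨y, rfl⟩
  have hle' : (α.symm ⟨{y}, isSubrack_singleton y⟩).val ⊆ {x} := hle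
  have hval : (α.symm ⟨{y}, isSubrack_singleton y⟩).val = {x} := by
    apply subset_antisymm hle'
    intro t ht
    rw [Set.mem_singleton_iff] at ht; subst ht
    have := hle' hx'
    rw [Set.mem_singleton_iff] at this; subst this
    exact hx'
  have h2 : α.symm ⟨{y}, isSubrack_singleton y⟩ = ⟨{x}, isSubrack_singleton x⟩ :=
    Subtype.ext hval
  have h3 : (⟨{y}, isSubrack_singleton y⟩ : SubrackLattice H)
      = α ⟨{x}, isSubrack_singleton x⟩ := by
    erw [← h2, α.apply_symm_apply]
  exact (congrArg Subtype.val h3).symm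

lemma subrack_exists_bij {G H : Type*} [Group G] [Group H]
    (α : SubrackLattice G ≃o SubrackLattice H) :
    ∃ φ : G → H, Function.Bijective φ ∧
      ∀ S : SubrackLattice G, (α S).val = φ '' S.val := by
  choose f hf using subrack_singleton_image α
  choose g hg using subrack_singleton_image α.symm
  have hfg : ∀ y : H, f (g y) = y := by
    intro y
    have h1 : α.symm ⟨{y}, isSubrack_singleton y⟩ = ⟨{g y}, isSubrack_singleton _⟩ :=
      Subtype.ext (hg y)
    have h2 : α ⟨{g y}, isSubrack_singleton _⟩ = ⟨{y}, isSubrack_singleton y⟩ := by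
      erw [← h1, α.apply_symm_apply]
    have := (hf (g y)).symm.trans (congrArg Subtype.val h2)
    exact (Set.singleton_eq_singleton_iff.mp this)
  have himg : ∀ S : SubrackLattice G, (α S).val = f '' S.val := by
    intro S
    ext y
    constructor
    · intro hy
      refine ⟨g y, ?_, hfg y⟩
      have hle : α.symm ⟨{y}, isSubrack_singleton y⟩ ≤ S := by
        erw [OrderIso.symm_apply_le]
        exact fun t ht => by rw [Set.mem_singleton_iff] at ht; subst ht; exact hy
      have : (α.symm ⟨{y}, isSubrack_singleton y⟩).val ⊆ S.val := hle
      exact this (by rw [hg y]; rfl)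
    · rintro ⟨x, hx, rfl⟩
      have hle : (⟨{x}, isSubrack_singleton x⟩ : SubrackLattice G) ≤ S :=
        fun t ht => by rw [Set.mem_singleton_iff] at ht; subst ht; exact hx
      have : α ⟨{x}, isSubrack_singleton x⟩ ≤ α S := α.monotone hle
      have h2 : (α ⟨{x}, isSubrack_singleton x⟩).val ⊆ (α S).val := this
      exact h2 (by rw [hf x]; rfl)
  refine ⟨f, ⟨?_, fun y => ⟨g y, hfg y⟩⟩, himg⟩
  intro x x' hxx
  have h1 : (α ⟨{x}, isSubrack_singleton x⟩).val = (α ⟨{x'}, isSubrack_singleton x'⟩).val := by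
    rw [hf x, hf x', hxx]
  have h2 := α.injective (Subtype.ext h1)
  have h3 := congrArg Subtype.val h2
  exact Set.singleton_eq_singleton_iff.mp h3

/-- Given an isomorphism α : R(G) ≅ R(H) and a normal subgroup N of G, the images
under α of the cosets of N partition H into parts of equal cardinality, and the
block α(N) is a union of conjugacy classes of H containing a central element. -/
theorem stmt12 {G H : Type*} [Group G] [Group H] [Finite G] [Finite H]
    (N : Subgroup G) [N.Normal]
    (hcoset : ∀ c : G, IsSubrack (c • (N : Set G)))
    (α : SubrackLattice G ≃o SubrackLattice H) :
    ((⋃ c : G, (α ⟨c • (N : Set G), hcoset c⟩).val)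
        = Set.univ) ∧
    (∀ c d : G,
      (α ⟨c • (N : Set G), hcoset c⟩).val =
          (α ⟨d • (N : Set G), hcoset d⟩).val ∨
      Disjoint (α ⟨c • (N : Set G), hcoset c⟩).val
          (α ⟨d • (N : Set G), hcoset d⟩).val) ∧
    (∀ c d : G,
      Nat.card (α ⟨c • (N : Set G), hcoset c⟩).val =
        Nat.card (α ⟨d • (N : Set G), hcoset d⟩).val) ∧
    (∀ x ∈ (α ⟨(1 : G) • (N : Set G), hcoset 1⟩).val,
      ∀ g : H, g * x * g⁻¹ ∈
        (α ⟨(1 : G) • (N : Set G), hcoset 1⟩).val) ∧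
    (∃ z ∈ (α ⟨(1 : G) • (N : Set G), hcoset 1⟩).val,
      ∀ h : H, h * z = z * h) := by
  obtain ⟨φ, ⟨hinj, hsurj⟩, himg⟩ := subrack_exists_bij α
  have hone : ((1 : G) • (N : Set G)) = (N : Set G) := one_smul _ _
  have self_mem : ∀ c : G, c ∈ c • (N : Set G) :=
    fun c => ⟨1, N.one_mem, by simp⟩
  -- coset dichotomy
  have dich : ∀ c d : G, c • (N : Set G) = d • (N : Set G) ∨
      Disjoint (c • (N : Set G)) (d • (N : Set G)) := by
    intro c d
    by_cases h : c⁻¹ * d ∈ N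
    · left
      ext t
      simp only [Set.mem_smul_set, smul_eq_mul]
      constructor
      · rintro ⟨n, hn, rfl⟩
        exact ⟨d⁻¹ * c * n, mul_mem (by simpa using inv_mem h) hn, by group⟩
      · rintro ⟨n, hn, rfl⟩
        exact ⟨c⁻¹ * d * n, mul_mem h hn, by group⟩
    · right
      rw [Set.disjoint_left]
      rintro t ⟨n, hn, rfl⟩ ⟨m, hm, hmeq⟩
      simp only [smul_eq_mul] at hmeq
      apply h
      have h2 : d = c * n * m⁻¹ := by rw [← hmeq]; group
      have h3 : c⁻¹ * d = n * m⁻¹ := by rw [h2]; group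
      rw [h3]
      exact mul_mem hn (inv_mem hm)
  refine ⟨?_, ?_, ?_, ?_, ?_⟩
  -- (1) union covers H
  · apply Set.eq_univ_of_forall
    intro y
    rw [Set.mem_iUnion]
    obtain ⟨a, rfl⟩ := hsurj y
    exact ⟨a, by erw [himg]; exact ⟨a, self_mem a, rfl⟩⟩
  -- (2) equal or disjoint
  · intro c d
    rcases dich c d with heq | hdis
    · left
      exact congrArg (fun S => (α S).val) (Subtype.ext heq)
    · right
      erw [himg, himg, Set.disjoint_left]
      rintro t ⟨u, hu, rfl⟩ ⟨v, hv, hveq⟩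
      rw [hinj hveq] at hv
      exact Set.disjoint_left.mp hdis hu hv
  -- (3) equal cardinality
  · have key : ∀ c : G, Nat.card (α ⟨c • (N : Set G), hcoset c⟩).val
        = Nat.card (N : Set G) := by
      intro c
      erw [himg]
      have h1 : Nat.card (φ '' (c • (N : Set G)) : Set H)
          = Nat.card (c • (N : Set G) : Set G) :=
        Nat.card_image_of_injective hinj _
      rw [h1, ← Set.image_smul, Nat.card_image_of_injective (MulAction.injective c)]
    intro c d
    rw [key c, key d]
  -- (4) block of N is a union of conjugacy classes
  · intro x hx g
    obtain ⟨a, rfl⟩ := hsurj g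
    by_cases ha : a ∈ N
    · have hB := (α ⟨(1 : G) • (N : Set G), hcoset 1⟩).2
      refine hB _ ?_ _ hx
      have hB1 : (α ⟨(1 : G) • (N : Set G), hcoset 1⟩).val
          = φ '' ((1 : G) • (N : Set G)) := himg _
      rw [hB1]
      refine ⟨a, ?_, rfl⟩
      show a ∈ (1 : G) • (N : Set G)
      rw [hone]
      exact ha
    · -- a ∉ N : use the subrack (N ∪ aN) and finiteness
      have hdisj : Disjoint ((1 : G) • (N : Set G)) (a • (N : Set G)) := by
        rcases dich 1 a with heq | hdis
        · exfalso
          apply ha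
          have : a ∈ (1 : G) • (N : Set G) := by rw [heq]; exact self_mem a
          rw [hone] at this
          exact this
        · exact hdis
      have hU : IsSubrack ((1 : G) • (N : Set G) ∪ a • (N : Set G)) := by
        rw [hone]
        exact isSubrack_union_cosets N a
      have hT := (α ⟨(1 : G) • (N : Set G) ∪ a • (N : Set G), hU⟩).2
      have hTeq : (α ⟨(1 : G) • (N : Set G) ∪ a • (N : Set G), hU⟩).val
          = φ '' ((1 : G) • (N : Set G)) ∪ φ '' (a • (N : Set G)) := by
        erw [himg]
        exact Set.image_union φ _ _
      have hB1 : (α ⟨(1 : G) • (N : Set G), hcoset 1⟩).val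
          = φ '' ((1 : G) • (N : Set G)) := himg _
      have hxB : x ∈ φ '' ((1 : G) • (N : Set G)) := hB1 ▸ hx
      have hgA : φ a ∈ φ '' (a • (N : Set G)) := ⟨a, self_mem a, rfl⟩
      have hconjT : φ a * x * (φ a)⁻¹
          ∈ φ '' ((1 : G) • (N : Set G)) ∪ φ '' (a • (N : Set G)) := by
        rw [← hTeq]
        exact hT _ (by rw [hTeq]; exact Or.inr hgA) _ (by rw [hTeq]; exact Or.inl hxB)
      have hA := (α ⟨a • (N : Set G), hcoset a⟩).2
      erw [himg] at hA
      -- conjugation by φ a maps the block A bijectively onto itself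
      have hconjinj : Function.Injective (fun t : H => φ a * t * (φ a)⁻¹) := by
        intro u v huv
        simp only at huv
        exact mul_left_cancel (mul_right_cancel huv)
      have hmaps : (fun t : H => φ a * t * (φ a)⁻¹) '' (φ '' (a • (N : Set G)))
          ⊆ φ '' (a • (N : Set G)) := by
        rintro t ⟨u, hu, rfl⟩
        exact hA _ hgA _ hu
      have hAeq : (fun t : H => φ a * t * (φ a)⁻¹) '' (φ '' (a • (N : Set G)))
          = φ '' (a • (N : Set G)) := by
        apply Set.eq_of_subset_of_ncard_le hmaps
        rw [Set.ncard_image_of_injective _ hconjinj]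
      rcases hconjT with hin | hin
      · rw [hB1]; exact hin
      · exfalso
        rw [← hAeq] at hin
        obtain ⟨t, ht, hteq⟩ := hin
        have : t = x := hconjinj hteq
        subst this
        obtain ⟨u, hu, rfl⟩ := hxB
        obtain ⟨v, hv, hveq⟩ := ht
        rw [hinj hveq] at hv
        exact Set.disjoint_left.mp hdisj hu hv
  -- (5) central element
  · refine ⟨φ 1, by erw [himg]; exact ⟨1, self_mem 1, rfl⟩, ?_⟩
    intro h
    obtain ⟨a, rfl⟩ := hsurj h
    have hpair := (α ⟨({1, a} : Set G), isSubrack_pair_one a⟩).2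
    have hpeq : (α ⟨({1, a} : Set G), isSubrack_pair_one a⟩).val = {φ 1, φ a} := by
      erw [himg]
      exact Set.image_pair φ 1 a
    rw [hpeq] at hpair
    have hmem := hpair (φ a) (Or.inr rfl) (φ 1) (Or.inl rfl)
    rcases hmem with he | he
    · exact mul_inv_eq_iff_eq_mul.mp he
    · rw [Set.mem_singleton_iff] at he
      have h4 : φ a * φ 1 = φ a * φ a := mul_inv_eq_iff_eq_mul.mp he
      have h5 : φ 1 = φ a := mul_left_cancel h4
      rw [h5]
end
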